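/- arXiv:2009.03355 — 3 statements merged into one kernel-verified Lean document; each statement's English description precedes it below -/
import Mathlib

section
/- Let f ∈ ℂ[X] be a monic polynomial of degree 4, let b ∈ ℂ with f(b) ≠ 0, let Υ₀ ∈ ℂ satisfy Υ₀² = f(b), and set Υ₁ = f′(b)/(2Υ₀) and Υ₂ = (2·f(b)·f″(b) − f′(b)²)/(4·f(b)·Υ₀). Then for every x ∈ ℂ with x ≠ b, (Υ₀/(x − b)² + Υ₁/(x − b) + Υ₂/2)² − f(x)/(x − b)⁴ = (Υ₂²/4 − 1) + (Υ₁·Υ₂ − f‴(b)/6)/(x − b), where f′, f″, f‴ are the derivatives of f. -/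
set_option maxHeartbeats 1000000

open Polynomial

/-- Key algebraic identity with all quantities abstracted: for nonzero `Υ0` and `t`,
the square of the ansatz minus the (Taylor-expanded) quartic over `t⁴` reduces to
a constant plus a simple pole term. -/
lemma aux_dpa (Υ0 d1 d2 d3 t : ℂ) (h0 : Υ0 ≠ 0) (ht : t ≠ 0) :
    (Υ0 / t ^ 2 + d1 / (2 * Υ0) / t + (2 * Υ0 ^ 2 * d2 - d1 ^ 2) / (4 * Υ0 ^ 2 * Υ0) / 2) ^ 2
      - (Υ0 ^ 2 + d1 * t + d2 * t ^ 2 / 2 + d3 * t ^ 3 / 6 + t ^ 4) / t ^ 4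
    = ((2 * Υ0 ^ 2 * d2 - d1 ^ 2) / (4 * Υ0 ^ 2 * Υ0)) ^ 2 / 4 - 1
      + (d1 / (2 * Υ0) * ((2 * Υ0 ^ 2 * d2 - d1 ^ 2) / (4 * Υ0 ^ 2 * Υ0)) - d3 / 6) / t := by
  obtain ⟨u, hu⟩ : ∃ u, Υ0 * u = 1 := ⟨Υ0⁻¹, mul_inv_cancel₀ h0⟩
  obtain ⟨s, hs⟩ : ∃ s, t * s = 1 := ⟨t⁻¹, mul_inv_cancel₀ ht⟩
  have hui : Υ0⁻¹ = u := (eq_inv_of_mul_eq_one_right hu).symm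
  have hsi : t⁻¹ = s := (eq_inv_of_mul_eq_one_right hs).symm
  simp only [div_eq_mul_inv, mul_inv, ← inv_pow, hui, hsi]
  linear_combination
    (((1:ℂ)/2)*s^2*d2 + s^3*d1 + ((-1:ℂ)/4)*u^2*s^2*d1^2 + ((1:ℂ)/2)*Υ0*u*s^2*d2
      + ((1:ℂ)/2)*Υ0^2*u^2*s^2*d2) * hu
    + ((-1:ℂ) + ((-1:ℂ)/6)*s*d3 + ((-1:ℂ)/2)*s^2*d2 + (-1:ℂ)*s^3*d1 + (-1:ℂ)*t*s
      + ((-1:ℂ)/6)*t*s^2*d3 + ((-1:ℂ)/2)*t*s^3*d2 + (-1:ℂ)*t^2*s^2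
      + ((-1:ℂ)/6)*t^2*s^3*d3 + (-1:ℂ)*t^3*s^3) * hs

/-- Computational identity for the square of the rational part of the elementary function
with a double pole at `b̂`, for a monic quartic `f`. -/
theorem double_pole_ansatz_square_identity
    (f : Polynomial ℂ) (hmonic : f.Monic) (hdeg : f.natDegree = 4)
    (b : ℂ) (hfb : f.eval b ≠ 0)
    (Υ0 : ℂ) (hΥ0 : Υ0 ^ 2 = f.eval b)
    (Υ1 : ℂ) (hΥ1 : Υ1 = (derivative f).eval b / (2 * Υ0))
    (Υ2 : ℂ) (hΥ2 : Υ2 = (2 * f.eval b * (derivative (derivative f)).eval b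
        - ((derivative f).eval b) ^ 2) / (4 * f.eval b * Υ0)) :
    ∀ x : ℂ, x ≠ b →
      (Υ0 / (x - b) ^ 2 + Υ1 / (x - b) + Υ2 / 2) ^ 2 - f.eval x / (x - b) ^ 4
        = (Υ2 ^ 2 / 4 - 1)
          + (Υ1 * Υ2 - (derivative (derivative (derivative f))).eval b / 6) / (x - b) := by
  intro x hx
  have h4 : f.coeff 4 = 1 := by
    have := hmonic.coeff_natDegree
    rwa [hdeg] at this
  have hf : f = C (f.coeff 0) + C (f.coeff 1) * X + C (f.coeff 2) * X ^ 2
      + C (f.coeff 3) * X ^ 3 + X ^ 4 := by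
    have h := Polynomial.as_sum_range' f 5 (by omega)
    rw [h]
    simp [Finset.sum_range_succ, ← Polynomial.C_mul_X_pow_eq_monomial, h4]
  have hΥ0ne : Υ0 ≠ 0 := by
    intro h; apply hfb; rw [← hΥ0, h]; ring
  have hxb : x - b ≠ 0 := sub_ne_zero.mpr hx
  -- Taylor expansion of the quartic `f` around `b`
  have hfx : f.eval x = f.eval b + (derivative f).eval b * (x - b)
      + (derivative (derivative f)).eval b * (x - b) ^ 2 / 2
      + (derivative (derivative (derivative f))).eval b * (x - b) ^ 3 / 6
      + (x - b) ^ 4 := by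
    conv_lhs => rw [hf]
    conv_rhs => rw [hf]
    simp only [derivative_add, derivative_mul, derivative_C, derivative_X, derivative_X_pow,
      eval_add, eval_mul, eval_C, eval_X, eval_pow, zero_mul, mul_one,
      zero_add, eval_natCast]
    push_cast
    ring
  rw [hΥ1, hΥ2, hfx, ← hΥ0]
  exact aux_dpa Υ0 ((derivative f).eval b) ((derivative (derivative f)).eval b)
    ((derivative (derivative (derivative f))).eval b) (x - b) hΥ0ne hxb
end

section
/- Let f ∈ ℂ[X] be a monic polynomial of degree 4, let b ∈ ℂ with f(b) ≠ 0, let Υ₀ ∈ ℂ satisfy Υ₀² = f(b), and set Υ₁ = f′(b)/(2Υ₀) and Υ₂ = (2·f(b)·f″(b) − f′(b)²)/(4·f(b)·Υ₀). Let η ∈ ℂ be a root of f with η ≠ b, and assume the condition Υ₀/(η − b)² + Υ₁/(η − b) + Υ₂/2 = 0. Then for every x ∈ ℂ with x ≠ b, (Υ₀/(x − b)² + Υ₁/(x − b) + Υ₂/2)² − f(x)/(x − b)⁴ = (Υ₂²/4 − 1)·(x − η)/(x − b). Consequently, for every Υx ∈ ℂ with Υx² = f(x) and x ≠ b, x ≠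 η, writing B(x) = Υ₀/(x − b)² + Υ₁/(x − b) + Υ₂/2 and A(x) = Υx/(x − b)², if B(x)² ≠ A(x)² and Υ₂² ≠ 4 then [(x − b)/((x − η)·(A(x) + B(x)))] · [(x − b)/((x − η)·(−A(x) + B(x)))] = (Υ₂²/4 − 1)⁻¹·((x − b)/(x − η))³. -/
open Polynomial

/-- Under the Abel condition at a root `η` of the monic quartic `f`, the square of the
rational part of the elementary function factors as `(Υ₂²/4 − 1)(x − η)/(x − b)`, and the
product formula `(F₁F₂)³ = G₁G₂ = (Υ₂²/4 − 1)⁻¹((x − b)/(x − η))³` holds. -/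
theorem product_formula_basis_functions
    (f : Polynomial ℂ) (hmonic : f.Monic) (hdeg : f.natDegree = 4)
    (b : ℂ) (hfb : f.eval b ≠ 0)
    (Υ0 : ℂ) (hΥ0 : Υ0 ^ 2 = f.eval b)
    (Υ1 : ℂ) (hΥ1 : Υ1 = (derivative f).eval b / (2 * Υ0))
    (Υ2 : ℂ) (hΥ2 : Υ2 = (2 * f.eval b * (derivative (derivative f)).eval b
        - ((derivative f).eval b) ^ 2) / (4 * f.eval b * Υ0))
    (η : ℂ) (hη : f.eval η = 0) (hηb : η ≠ b)
    (hcond : Υ0 / (η - b) ^ 2 + Υ1 / (η - b) + Υ2 / 2 = 0) :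
    (∀ x : ℂ, x ≠ b →
      (Υ0 / (x - b) ^ 2 + Υ1 / (x - b) + Υ2 / 2) ^ 2 - f.eval x / (x - b) ^ 4
        = (Υ2 ^ 2 / 4 - 1) * (x - η) / (x - b)) ∧
    (∀ x Υx B A : ℂ, Υx ^ 2 = f.eval x → x ≠ b → x ≠ η →
      B = Υ0 / (x - b) ^ 2 + Υ1 / (x - b) + Υ2 / 2 →
      A = Υx / (x - b) ^ 2 →
      B ^ 2 ≠ A ^ 2 → Υ2 ^ 2 ≠ 4 →
      ((x - b) / ((x - η) * (A + B))) * ((x - b) / ((x - η) * (-A + B)))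
        = (Υ2 ^ 2 / 4 - 1)⁻¹ * ((x - b) / (x - η)) ^ 3) := by
  have hΥ0ne : Υ0 ≠ 0 := by
    intro h; apply hfb; rw [← hΥ0, h]; ring
  have h4 : f.coeff 4 = 1 := by have := hmonic.coeff_natDegree; rwa [hdeg] at this
  have hev : ∀ x : ℂ, f.eval x = f.coeff 0 + f.coeff 1*x + f.coeff 2*x^2 + f.coeff 3*x^3 + x^4 := by
    intro x
    rw [Polynomial.eval_eq_sum_range, hdeg]
    simp [Finset.sum_range_succ, h4]
  have hd1le : (derivative f).natDegree < 4 := by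
    have := Polynomial.natDegree_derivative_le f
    omega
  have hd1 : (derivative f).eval b = f.coeff 1 + 2*f.coeff 2*b + 3*f.coeff 3*b^2 + 4*b^3 := by
    rw [Polynomial.eval_eq_sum_range' hd1le]
    simp [Finset.sum_range_succ, Polynomial.coeff_derivative, h4]
    ring
  have hd2le : (derivative (derivative f)).natDegree < 3 := by
    have h1 := Polynomial.natDegree_derivative_le f
    have h2 := Polynomial.natDegree_derivative_le (derivative f)
    omega
  have hd2 : (derivative (derivative f)).eval b = 2*f.coeff 2 + 6*f.coeff 3*b + 12*b^2 := by
    rw [Polynomial.eval_eq_sum_range' hd2le]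
    simp [Finset.sum_range_succ, Polynomial.coeff_derivative, h4]
    ring
  set a0 := f.coeff 0 with ha0
  set a1 := f.coeff 1 with ha1
  set a2 := f.coeff 2 with ha2
  set a3 := f.coeff 3 with ha3
  have hb0 : Υ0 ^ 2 = a0 + a1*b + a2*b^2 + a3*b^3 + b^4 := by rw [hΥ0, hev b]
  have hc1 : 2*Υ0*Υ1 = a1 + 2*a2*b + 3*a3*b^2 + 4*b^3 := by
    rw [hΥ1, hd1]; field_simp
  have hc2 : Υ1^2 + Υ0*Υ2 = a2 + 3*a3*b + 6*b^2 := by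
    have h : 4*Υ0^2*Υ0*Υ2 = 2 * Υ0^2 * (2*a2 + 6*a3*b + 12*b^2) - (2*Υ0*Υ1)^2 := by
      rw [hΥ2, ← hΥ0, hd2, hd1, ← hc1]
      field_simp
    have h2 : Υ0^2 ≠ 0 := pow_ne_zero 2 hΥ0ne
    apply mul_left_cancel₀ (mul_ne_zero (by norm_num : (4:ℂ) ≠ 0) h2)
    linear_combination h
  have hfx : ∀ x : ℂ, f.eval x = Υ0^2 + (2*Υ0*Υ1)*(x-b) + (Υ1^2+Υ0*Υ2)*(x-b)^2
      + (a3+4*b)*(x-b)^3 + (x-b)^4 := by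
    intro x
    rw [hev x]
    linear_combination (-1 : ℂ) * hb0 - (x-b)*hc1 - (x-b)^2*hc2
  have key0 : ∀ t : ℂ, t ≠ 0 →
      (Υ0 / t ^ 2 + Υ1 / t + Υ2 / 2) ^ 2
        - (Υ0^2 + (2*Υ0*Υ1)*t + (Υ1^2+Υ0*Υ2)*t^2 + (a3+4*b)*t^3 + t^4) / t ^ 4
          = (Υ1*Υ2 - (a3+4*b))/t + Υ2^2/4 - 1 := by
    intro t ht
    rw [sub_eq_iff_eq_add]
    field_simp
    ring
  have key : ∀ x : ℂ, x ≠ b →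
      (Υ0 / (x - b) ^ 2 + Υ1 / (x - b) + Υ2 / 2) ^ 2 - f.eval x / (x - b) ^ 4
        = (Υ1*Υ2 - (a3+4*b))/(x-b) + Υ2^2/4 - 1 := by
    intro x hx
    rw [hfx x]
    exact key0 (x - b) (sub_ne_zero.mpr hx)
  have hηb' : η - b ≠ 0 := sub_ne_zero.mpr hηb
  have hα : Υ1*Υ2 - (a3+4*b) = -(Υ2^2/4 - 1)*(η-b) := by
    have h := key η hηb
    rw [hcond, hη] at h
    norm_num at h
    field_simp at h
    linear_combination (-1/4 : ℂ) * h
  have gen : ∀ β u v : ℂ, v ≠ 0 → (-β*u)/v + β = β*(v-u)/v := by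
    intro β u v hv
    field_simp
    ring
  have part1 : ∀ x : ℂ, x ≠ b →
      (Υ0 / (x - b) ^ 2 + Υ1 / (x - b) + Υ2 / 2) ^ 2 - f.eval x / (x - b) ^ 4
        = (Υ2 ^ 2 / 4 - 1) * (x - η) / (x - b) := by
    intro x hx
    have ht : x - b ≠ 0 := sub_ne_zero.mpr hx
    rw [key x hx, hα]
    have L := gen (Υ2^2/4 - 1) (η - b) (x - b) ht
    linear_combination L
  refine ⟨part1, ?_⟩
  intro x Υx B A hΥx hxb hxη hB hA hBA hΥ24
  have ht : x - b ≠ 0 := sub_ne_zero.mpr hxb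
  have htη : x - η ≠ 0 := sub_ne_zero.mpr hxη
  have hβ : Υ2^2/4 - 1 ≠ 0 := by
    intro h
    apply hΥ24
    linear_combination 4*h
  have hA2 : A^2 = f.eval x / (x-b)^4 := by
    rw [hA, div_pow, ← hΥx]; ring_nf
  have hBA2 : B^2 - A^2 = (Υ2^2/4 - 1) * (x - η) / (x - b) := by
    rw [hB, hA2]; exact part1 x hxb
  have hprod : (A+B)*(-A+B) ≠ 0 := by
    intro h
    apply hBA
    have h2 : B^2 - A^2 = 0 := by linear_combination h
    linear_combination h2
  have hApB : A + B ≠ 0 := fun h => hprod (by rw [h]; ring)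
  have hmAB : -A + B ≠ 0 := fun h => hprod (by rw [h]; ring)
  set β := Υ2^2/4 - 1 with hβdef
  have hkey : (A+B)*(-A+B)*(x-b) = β*(x-η) := by
    field_simp at hBA2
    linear_combination hBA2
  field_simp
  linear_combination (-1 : ℂ) * hkey
end

section
/- Let K ∈ ℂ with Im(K²) ≠ 0 and let v : ℤ × ℤ → ℂ be such that: (i) the function (m,n) ↦ ‖v(m,n)‖² is summable over ℤ × ℤ (v is square-summable); (ii) v(m,n) = 0 whenever m ≥ 0 and n ≥ 0 (Dirichlet condition on the boundary of the blocked first quadrant, and vanishing inside it); (iii) the discrete Helmholtz equation v(m,n−1) + v(m,n+1) + v(m−1,n) + v(m+1,n) + (K² − 4)·v(m,n) = 0 holds at every node (m,n) with m < 0 or n < 0. Then v is identically zero. -/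
open Complex

set_option maxHeartbeats 1000000

/-- Uniqueness of the square-summable solution of the Dirichlet diffraction problem:
if `Im K² ≠ 0` and `v ∈ l²(ℤ²)` vanishes on the (closed) first quadrant and satisfies the
discrete Helmholtz equation at every node outside it, then `v ≡ 0`. -/
theorem diffraction_uniqueness
    (K : ℂ) (hK : (K ^ 2).im ≠ 0)
    (v : ℤ × ℤ → ℂ)
    (hsum : Summable (fun p : ℤ × ℤ => ‖v p‖ ^ 2))
    (hzero : ∀ m n : ℤ, 0 ≤ m → 0 ≤ n → v (m, n) = 0)
    (heq : ∀ m n : ℤ, (m < 0 ∨ n < 0) →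
      v (m, n - 1) + v (m, n + 1) + v (m - 1, n) + v (m + 1, n)
        + (K ^ 2 - 4) * v (m, n) = 0) :
    ∀ p : ℤ × ℤ, v p = 0 := by
  have hshift : ∀ e : ℤ × ℤ, Summable (fun p : ℤ × ℤ => ‖v (p + e)‖ ^ 2) := fun e =>
    (Equiv.addRight e).summable_iff.2 hsum
  have hprod : ∀ e : ℤ × ℤ, Summable (fun p : ℤ × ℤ => v (p + e) * (starRingEnd ℂ) (v p)) := by
    intro e
    apply Summable.of_norm_bounded
      (g := fun p => (‖v (p + e)‖ ^ 2 + ‖v p‖ ^ 2) / 2) (((hshift e).add hsum).div_const 2)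
    intro p
    rw [norm_mul, RCLike.norm_conj]
    nlinarith [sq_nonneg (‖v (p + e)‖ - ‖v p‖), norm_nonneg (v (p + e)), norm_nonneg (v p)]
  have hsq : Summable (fun p : ℤ × ℤ => v p * (starRingEnd ℂ) (v p)) := by
    simpa using hprod 0
  -- pointwise identity after multiplying by conj v
  have key : ∀ p : ℤ × ℤ,
      v (p + ((0:ℤ), (-1:ℤ))) * (starRingEnd ℂ) (v p)
      + v (p + ((0:ℤ), (1:ℤ))) * (starRingEnd ℂ) (v p)
      + v (p + ((-1:ℤ), (0:ℤ))) * (starRingEnd ℂ) (v p)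
      + v (p + ((1:ℤ), (0:ℤ))) * (starRingEnd ℂ) (v p)
      + (K ^ 2 - 4) * (v p * (starRingEnd ℂ) (v p)) = 0 := by
    rintro ⟨m, n⟩
    by_cases h : m < 0 ∨ n < 0
    · have hmn := heq m n h
      have e1 : ((m, n) : ℤ × ℤ) + (0, -1) = (m, n - 1) := by simp [Prod.ext_iff]; ring
      have e2 : ((m, n) : ℤ × ℤ) + (0, 1) = (m, n + 1) := by simp [Prod.ext_iff]
      have e3 : ((m, n) : ℤ × ℤ) + (-1, 0) = (m - 1, n) := by simp [Prod.ext_iff]; ring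
      have e4 : ((m, n) : ℤ × ℤ) + (1, 0) = (m + 1, n) := by simp [Prod.ext_iff]
      rw [e1, e2, e3, e4]
      calc v (m, n - 1) * (starRingEnd ℂ) (v (m, n)) + v (m, n + 1) * (starRingEnd ℂ) (v (m, n))
            + v (m - 1, n) * (starRingEnd ℂ) (v (m, n)) + v (m + 1, n) * (starRingEnd ℂ) (v (m, n))
            + (K ^ 2 - 4) * (v (m, n) * (starRingEnd ℂ) (v (m, n)))
          = (v (m, n - 1) + v (m, n + 1) + v (m - 1, n) + v (m + 1, n)
            + (K ^ 2 - 4) * v (m, n)) * (starRingEnd ℂ) (v (m, n)) := by ring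
        _ = 0 := by rw [hmn, zero_mul]
    · push_neg at h
      have : v (m, n) = 0 := hzero m n h.1 h.2
      simp [this]
  -- sum the identity over all of ℤ²
  have hsum0 : (∑' p, v (p + ((0:ℤ), (-1:ℤ))) * (starRingEnd ℂ) (v p))
      + (∑' p, v (p + ((0:ℤ), (1:ℤ))) * (starRingEnd ℂ) (v p))
      + (∑' p, v (p + ((-1:ℤ), (0:ℤ))) * (starRingEnd ℂ) (v p))
      + (∑' p, v (p + ((1:ℤ), (0:ℤ))) * (starRingEnd ℂ) (v p))
      + (K ^ 2 - 4) * (∑' p, v p * (starRingEnd ℂ) (v p)) = 0 := by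
    rw [← tsum_mul_left, ← Summable.tsum_add (hprod _) (hprod _),
      ← Summable.tsum_add ((hprod _).add (hprod _)) (hprod _),
      ← Summable.tsum_add (((hprod _).add (hprod _)).add (hprod _)) (hprod _),
      ← Summable.tsum_add ((((hprod _).add (hprod _)).add (hprod _)).add (hprod _))
        (hsq.mul_left _)]
    calc ∑' p, (v (p + ((0:ℤ), (-1:ℤ))) * (starRingEnd ℂ) (v p)
          + v (p + ((0:ℤ), (1:ℤ))) * (starRingEnd ℂ) (v p)
          + v (p + ((-1:ℤ), (0:ℤ))) * (starRingEnd ℂ) (v p)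
          + v (p + ((1:ℤ), (0:ℤ))) * (starRingEnd ℂ) (v p)
          + (K ^ 2 - 4) * (v p * (starRingEnd ℂ) (v p)))
        = ∑' _ : ℤ × ℤ, (0 : ℂ) := tsum_congr key
      _ = 0 := tsum_zero
  -- conjugate symmetry of the shifted sums
  have hconj : ∀ e : ℤ × ℤ, ∑' p, v (p + e) * (starRingEnd ℂ) (v p)
      = (starRingEnd ℂ) (∑' p, v (p + (-e)) * (starRingEnd ℂ) (v p)) := by
    intro e
    calc ∑' p, v (p + e) * (starRingEnd ℂ) (v p)
        = ∑' p, v ((p + (-e)) + e) * (starRingEnd ℂ) (v (p + (-e))) :=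
          ((Equiv.addRight (-e)).tsum_eq
            (fun p => v (p + e) * (starRingEnd ℂ) (v p))).symm
      _ = ∑' p, star (v (p + (-e)) * (starRingEnd ℂ) (v p)) := by
          refine tsum_congr fun p => ?_
          simp only [neg_add_cancel_right, star_mul', RCLike.star_def, starRingEnd_self_apply]
          ring
      _ = (starRingEnd ℂ) (∑' p, v (p + (-e)) * (starRingEnd ℂ) (v p)) := by
          rw [starRingEnd_apply, tsum_star]
  -- identify the diagonal sum as a real number
  have hreal : ∑' p, v p * (starRingEnd ℂ) (v p)
      = ((∑' p, ‖v p‖ ^ 2 : ℝ) : ℂ) := by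
    rw [Complex.ofReal_tsum]
    refine tsum_congr fun p => ?_
    rw [Complex.mul_conj]
    norm_cast
    rw [← Complex.sq_norm]
  set S : ℝ := ∑' p, ‖v p‖ ^ 2 with hS
  -- take imaginary parts
  have hS0 : S = 0 := by
    have h1 := hconj ((0:ℤ), (1:ℤ))
    have h2 := hconj ((1:ℤ), (0:ℤ))
    have e1 : (-(((0:ℤ), (1:ℤ)) : ℤ × ℤ)) = ((0:ℤ), (-1:ℤ)) := by simp [Prod.ext_iff]
    have e2 : (-(((1:ℤ), (0:ℤ)) : ℤ × ℤ)) = ((-1:ℤ), (0:ℤ)) := by simp [Prod.ext_iff]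
    rw [e1] at h1
    rw [e2] at h2
    rw [h1, h2, hreal] at hsum0
    have him := congrArg Complex.im hsum0
    simp only [Complex.add_im, Complex.conj_im, Complex.mul_im, Complex.ofReal_re,
      Complex.ofReal_im, Complex.sub_im, Complex.sub_re, Complex.zero_im, mul_zero,
      add_zero] at him
    have : (K ^ 2).im * S = 0 := by
      have h4 : ((4:ℂ)).im = 0 := by norm_num
      linear_combination him + S * h4
    rcases mul_eq_zero.1 this with h | h
    · exact absurd h hK
    · exact h
  intro p
  have hle : ‖v p‖ ^ 2 ≤ S := Summable.le_tsum hsum p (fun j _ => sq_nonneg _)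
  have hge : 0 ≤ ‖v p‖ ^ 2 := sq_nonneg _
  have : ‖v p‖ ^ 2 = 0 := le_antisymm (hS0 ▸ hle) hge
  have : ‖v p‖ = 0 := by nlinarith
  exact norm_eq_zero.1 this
end
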